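/- With the same setup (p odd prime, D dihedral of order 2p acting on a ℤ_p-module U, G = ⟨τ⟩, tor(U) = tor(U^G)), the isomorphism φ : I_G U ∩ U^G → Ū^G/Ū_F is Δ-antiequivariant: if δ is the image of σ in Δ = D/G, then φ(δ(x)) = δ(φ(x))^{-1} for all x ∈ I_G U ∩ U^G. Consequently φ induces an isomorphism (I_G U ∩ U^G)/(I_G U ∩ U^D) ≅ Ū^D/(Ū_F)^Δ. -/

import Mathlib

/-- Fixed-point submodule of a linear automorphism. -/
def fixL (p : ℕ) [Fact p.Prime] (U : Type*) [AddCommGroup U] [Module ℤ_[p] U]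
    (f : U ≃ₗ[ℤ_[p]] U) : Submodule ℤ_[p] U where
  carrier := {m | f m = m}
  zero_mem' := by simp
  add_mem' := by
    intro a b ha hb
    simp only [Set.mem_setOf_eq, map_add] at *
    rw [ha, hb]
  smul_mem' := by
    intro c m hm
    simp only [Set.mem_setOf_eq, map_smul] at *
    rw [hm]

/-- The automorphism of `Ū = U/tor(U)` induced by a linear automorphism of `U`
(automorphisms preserve the torsion submodule). -/
noncomputable def qmap (p : ℕ) [Fact p.Prime] (U : Type*) [AddCommGroup U]
    [Module ℤ_[p] U] (f : U ≃ₗ[ℤ_[p]] U) :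
    (U ⧸ Submodule.torsion ℤ_[p] U) →ₗ[ℤ_[p]] (U ⧸ Submodule.torsion ℤ_[p] U) :=
  Submodule.mapQ _ _ f.toLinearMap (by
    intro u hu
    obtain ⟨c, hc⟩ := hu
    exact Submodule.mem_comap.2 ⟨c, by
      show (c : ℤ_[p]) • (f u : U) = 0
      rw [← map_smul f (c : ℤ_[p]) u, show (c : ℤ_[p]) • u = 0 from hc, map_zero]⟩)

/-- `Ū^G`: the fixed points of the induced action of `τ` on `Ū = U/tor(U)`. -/
noncomputable def UGbar (p : ℕ) [Fact p.Prime] (U : Type*) [AddCommGroup U]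
    [Module ℤ_[p] U] (τ : U ≃ₗ[ℤ_[p]] U) : Submodule ℤ_[p] (U ⧸ Submodule.torsion ℤ_[p] U) :=
  LinearMap.eqLocus (qmap p U τ) LinearMap.id

/-- `Ū_F`: the image of `U_F = U^G` in `Ū = U/tor(U)`. -/
noncomputable def UFbar (p : ℕ) [Fact p.Prime] (U : Type*) [AddCommGroup U]
    [Module ℤ_[p] U] (τ : U ≃ₗ[ℤ_[p]] U) : Submodule ℤ_[p] (U ⧸ Submodule.torsion ℤ_[p] U) :=
  (fixL p U τ).map (Submodule.torsion ℤ_[p] U).mkQ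

/-- `Ū^Δ`: the fixed points of the induced action of `σ` on `Ū = U/tor(U)`. -/
noncomputable def USbar (p : ℕ) [Fact p.Prime] (U : Type*) [AddCommGroup U]
    [Module ℤ_[p] U] (σ : U ≃ₗ[ℤ_[p]] U) : Submodule ℤ_[p] (U ⧸ Submodule.torsion ℤ_[p] U) :=
  LinearMap.eqLocus (qmap p U σ) LinearMap.id


section Stmt12Aux

variable {p : ℕ} [Fact p.Prime] {U : Type*} [AddCommGroup U] [Module ℤ_[p] U]

private lemma qmap_mk' (f : U ≃ₗ[ℤ_[p]] U) (u : U) :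
    qmap p U f (Submodule.Quotient.mk u) = Submodule.Quotient.mk (f u) := by
  simp [qmap, Submodule.mapQ_apply]

private lemma mem_fixL' {f : U ≃ₗ[ℤ_[p]] U} {a : U} : a ∈ fixL p U f ↔ f a = a := Iff.rfl

private lemma tormap' (f : U ≃ₗ[ℤ_[p]] U) {t : U} (ht : t ∈ Submodule.torsion ℤ_[p] U) :
    f t ∈ Submodule.torsion ℤ_[p] U := by
  obtain ⟨c, hc⟩ := ht
  exact ⟨c, by
    show (c : ℤ_[p]) • (f t : U) = 0
    rw [← map_smul f (c : ℤ_[p]) t, show (c : ℤ_[p]) • t = 0 from hc, map_zero]⟩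

variable (τ σ : U ≃ₗ[ℤ_[p]] U)

private lemma sig_sig (hσ : σ ^ 2 = 1) (u : U) : σ (σ u) = u := by
  have : (σ * σ) u = (1 : U ≃ₗ[ℤ_[p]] U) u := by rw [← sq, hσ]
  exact this

private lemma inv_app (u : U) : τ⁻¹ (τ u) = u := by
  have : (τ⁻¹ * τ) u = (1 : U ≃ₗ[ℤ_[p]] U) u := by rw [inv_mul_cancel]
  exact this

private lemma inv_app₂ (u : U) : τ (τ⁻¹ u) = u := by
  have h := inv_app (p := p) τ⁻¹ u
  rwa [inv_inv] at h

private lemma fix_inv {a : U} (ha : τ a = a) : τ⁻¹ a = a := by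
  conv_lhs => rw [← ha]
  exact inv_app τ a

private lemma sig_tau (hσ : σ ^ 2 = 1) (hc : σ * τ * σ = τ⁻¹) (u : U) :
    σ (τ u) = τ⁻¹ (σ u) := by
  have h : σ * τ = τ⁻¹ * σ := by
    have h1 : (σ * τ * σ) * σ = τ⁻¹ * σ := by rw [hc]
    rwa [mul_assoc (σ * τ), ← sq, hσ, mul_one] at h1
  show (σ * τ) u = (τ⁻¹ * σ) u
  rw [h]

private lemma tau_sig (hσ : σ ^ 2 = 1) (hc : σ * τ * σ = τ⁻¹) (u : U) :
    τ (σ u) = σ (τ⁻¹ u) := by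
  have h : τ * σ = σ * τ⁻¹ := by
    have h1 : σ * (σ * τ * σ) = σ * τ⁻¹ := by rw [hc]
    rwa [show σ * (σ * τ * σ) = (σ * σ) * (τ * σ) by noncomm_ring, ← sq, hσ, one_mul] at h1
  show (τ * σ) u = (σ * τ⁻¹) u
  rw [h]

private lemma sig_fix (hσ : σ ^ 2 = 1) (hc : σ * τ * σ = τ⁻¹) {a : U}
    (ha : a ∈ fixL p U τ) : σ a ∈ fixL p U τ := by
  show τ (σ a) = σ a
  rw [tau_sig τ σ hσ hc, fix_inv τ ha]

/-- `F = 1 - τ` descended to `U / tor U`. -/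
private noncomputable def Fq (htor : Submodule.torsion ℤ_[p] U ≤ fixL p U τ) :
    (U ⧸ Submodule.torsion ℤ_[p] U) →ₗ[ℤ_[p]] U :=
  Submodule.liftQ _ (LinearMap.id - τ.toLinearMap) (fun t ht => by
    have h : τ t = t := htor ht
    simp [LinearMap.mem_ker, h])

private lemma Fq_mk (htor : Submodule.torsion ℤ_[p] U ≤ fixL p U τ) (u : U) :
    Fq τ htor (Submodule.Quotient.mk u) = u - τ u := by
  simp [Fq]

private lemma Fq_mem (htor : Submodule.torsion ℤ_[p] U ≤ fixL p U τ)
    {x : U ⧸ Submodule.torsion ℤ_[p] U} (hx : x ∈ UGbar p U τ) :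
    Fq τ htor x ∈ LinearMap.range (LinearMap.id - τ.toLinearMap) ⊓ fixL p U τ := by
  obtain ⟨u, rfl⟩ := Submodule.Quotient.mk_surjective _ x
  have hx' : (Submodule.Quotient.mk (τ u) : U ⧸ Submodule.torsion ℤ_[p] U)
      = Submodule.Quotient.mk u := by
    have : qmap p U τ (Submodule.Quotient.mk u) = Submodule.Quotient.mk u := hx
    rwa [qmap_mk'] at this
  have ht : τ u - u ∈ Submodule.torsion ℤ_[p] U := (Submodule.Quotient.eq _).1 hx'
  have h1 : τ (τ u - u) = τ u - u := htor ht
  rw [map_sub] at h1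
  rw [Fq_mk]
  refine ⟨⟨u, by simp⟩, ?_⟩
  show τ (u - τ u) = u - τ u
  rw [map_sub, eq_add_of_sub_eq h1]
  abel

private lemma mem_torsion_of_inf (hτ : τ ^ p = 1) {x : U}
    (hx : x ∈ LinearMap.range (LinearMap.id - τ.toLinearMap) ⊓ fixL p U τ) :
    x ∈ Submodule.torsion ℤ_[p] U := by
  obtain ⟨⟨u, hu⟩, hfix⟩ := hx
  have hfix' : τ x = x := hfix
  have hxu : x = u - τ u := by rw [← hu]; simp
  have hpow : ∀ i : ℕ, (τ ^ i) x = x := by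
    intro i
    induction i with
    | zero => rfl
    | succ n ih =>
      have : (τ ^ (n + 1)) x = (τ ^ n) (τ x) := by
        rw [pow_succ]; rfl
      rw [this, hfix', ih]
  have key : ∑ i ∈ Finset.range p, ((τ ^ (i + 1)) u - (τ ^ i) u) = (τ ^ p) u - (τ ^ 0) u :=
    Finset.sum_range_sub (fun i => (τ ^ i) u) p
  have hterm : ∀ i : ℕ, (τ ^ (i + 1)) u - (τ ^ i) u = -x := by
    intro i
    have h1 : (τ ^ (i + 1)) u = (τ ^ i) (τ u) := by rw [pow_succ]; rfl
    have h2 : (τ ^ i) (τ u) - (τ ^ i) u = (τ ^ i) (τ u - u) := by rw [map_sub]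
    rw [h1, h2, show τ u - u = -x by rw [hxu]; abel, map_neg, hpow i]
  have hsum : ∑ i ∈ Finset.range p, ((τ ^ (i + 1)) u - (τ ^ i) u) = p • (-x) := by
    rw [Finset.sum_congr rfl (fun i _ => hterm i)]
    simp
  rw [hsum, hτ] at key
  have hp0 : p • (-x) = 0 := by
    rw [key]
    show (1 : U ≃ₗ[ℤ_[p]] U) u - (1 : U ≃ₗ[ℤ_[p]] U) u = 0
    simp
  have hpx : (p : ℤ_[p]) • x = 0 := by
    have : p • x = 0 := by
      have := congrArg Neg.neg hp0
      simpa using this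
    rw [Nat.cast_smul_eq_nsmul, this]
  have hpne : (p : ℤ_[p]) ≠ 0 := by
    exact_mod_cast Nat.cast_ne_zero.2 (Fact.out : p.Prime).ne_zero
  exact ⟨⟨(p : ℤ_[p]), mem_nonZeroDivisors_of_ne_zero hpne⟩, hpx⟩

/-- The map `Φ : Ū^G → I_G U ∩ U^G`. -/
private noncomputable def Phi (htor : Submodule.torsion ℤ_[p] U ≤ fixL p U τ) :
    ↥(UGbar p U τ) →ₗ[ℤ_[p]]
      ↥(LinearMap.range (LinearMap.id - τ.toLinearMap) ⊓ fixL p U τ) :=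
  LinearMap.codRestrict _ ((Fq τ htor).comp (UGbar p U τ).subtype)
    (fun z => Fq_mem τ htor z.2)

private lemma Phi_coe (htor : Submodule.torsion ℤ_[p] U ≤ fixL p U τ) (z : ↥(UGbar p U τ)) :
    (Phi τ htor z : U) = Fq τ htor z.1 := rfl

private lemma Phi_eq_zero_iff (htor : Submodule.torsion ℤ_[p] U ≤ fixL p U τ)
    (z : ↥(UGbar p U τ)) :
    Phi τ htor z = 0 ↔ z ∈ (UFbar p U τ).comap (UGbar p U τ).subtype := by
  constructor
  · intro h
    obtain ⟨u, hu⟩ := Submodule.Quotient.mk_surjective _ z.1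
    have h0 : Fq τ htor z.1 = 0 := by rw [← Phi_coe τ htor, h]; rfl
    rw [← hu, Fq_mk] at h0
    have hufix : u ∈ fixL p U τ := by
      show τ u = u
      exact (sub_eq_zero.1 h0).symm
    exact ⟨u, hufix, by rw [Submodule.mkQ_apply, hu]; rfl⟩
  · rintro ⟨v, hv, hveq⟩
    have : Fq τ htor z.1 = 0 := by
      rw [show z.1 = Submodule.Quotient.mk v from hveq.symm, Fq_mk,
        show τ v = v from hv, sub_self]
    exact Subtype.ext (by rw [Phi_coe τ htor, this]; rfl)

private lemma Phi_surjective (hτ : τ ^ p = 1)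
    (htor : Submodule.torsion ℤ_[p] U ≤ fixL p U τ) :
    Function.Surjective (Phi τ htor) := by
  rintro ⟨x, hx⟩
  obtain ⟨⟨u, hu⟩, hfix⟩ := hx
  have hxu : x = u - τ u := by rw [← hu]; simp
  have hxtor : x ∈ Submodule.torsion ℤ_[p] U :=
    mem_torsion_of_inf τ hτ ⟨⟨u, hu⟩, hfix⟩
  have hz : (Submodule.Quotient.mk u : U ⧸ Submodule.torsion ℤ_[p] U) ∈ UGbar p U τ := by
    show qmap p U τ (Submodule.Quotient.mk u) = Submodule.Quotient.mk u
    rw [qmap_mk', Submodule.Quotient.eq]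
    rw [show τ u - u = -x by rw [hxu]; abel]
    exact neg_mem hxtor
  exact ⟨⟨Submodule.Quotient.mk u, hz⟩, Subtype.ext (by
    rw [Phi_coe τ htor]
    show Fq τ htor (Submodule.Quotient.mk u) = x
    rw [Fq_mk, hxu])⟩

private lemma qsig_mem_UGbar (hσ : σ ^ 2 = 1) (hc : σ * τ * σ = τ⁻¹)
    {x : U ⧸ Submodule.torsion ℤ_[p] U} (hx : x ∈ UGbar p U τ) :
    qmap p U σ x ∈ UGbar p U τ := by
  obtain ⟨u, rfl⟩ := Submodule.Quotient.mk_surjective _ x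
  have ht : τ u - u ∈ Submodule.torsion ℤ_[p] U := by
    have : qmap p U τ (Submodule.Quotient.mk u) = Submodule.Quotient.mk u := hx
    rw [qmap_mk'] at this
    exact (Submodule.Quotient.eq _).1 this
  show qmap p U τ (qmap p U σ (Submodule.Quotient.mk u)) = qmap p U σ (Submodule.Quotient.mk u)
  rw [qmap_mk', qmap_mk', tau_sig τ σ hσ hc, Submodule.Quotient.eq]
  rw [show σ (τ⁻¹ u) - σ u = σ (τ⁻¹ u - u) by rw [map_sub]]
  refine tormap' σ ?_
  have h1 : τ⁻¹ u - u = τ⁻¹ (u - τ u) := by rw [map_sub, inv_app]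
  rw [h1, show u - τ u = -(τ u - u) by abel, map_neg]
  exact neg_mem (tormap' τ⁻¹ ht)

/-- the key antiequivariance computation: `Fq(σ̄ x) = -σ (Fq x)` for `x ∈ Ū^G`. -/
private lemma Fq_qsig (hσ : σ ^ 2 = 1) (hc : σ * τ * σ = τ⁻¹)
    (htor : Submodule.torsion ℤ_[p] U ≤ fixL p U τ)
    {x : U ⧸ Submodule.torsion ℤ_[p] U} (hx : x ∈ UGbar p U τ) :
    Fq τ htor (qmap p U σ x) = - σ (Fq τ htor x) := by
  obtain ⟨u, rfl⟩ := Submodule.Quotient.mk_surjective _ x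
  have ht : τ u - u ∈ Submodule.torsion ℤ_[p] U := by
    have : qmap p U τ (Submodule.Quotient.mk u) = Submodule.Quotient.mk u := hx
    rw [qmap_mk'] at this
    exact (Submodule.Quotient.eq _).1 this
  have htfix : τ (τ u - u) = τ u - u := htor ht
  rw [qmap_mk', Fq_mk, Fq_mk, tau_sig τ σ hσ hc]
  rw [show σ u - σ (τ⁻¹ u) = σ (u - τ⁻¹ u) by rw [map_sub],
    show -(σ (u - τ u)) = σ (τ u - u) by rw [← map_neg]; congr 1; abel]
  congr 1
  have h1 : u - τ⁻¹ u = τ⁻¹ (τ u - u) := by rw [map_sub, inv_app]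
  rw [h1, fix_inv τ htfix]

private lemma liftQ_bij {M N : Type*} [AddCommGroup M] [Module ℤ_[p] M]
    [AddCommGroup N] [Module ℤ_[p] N] (S : Submodule ℤ_[p] M) (f : M →ₗ[ℤ_[p]] N)
    (hker : ∀ m, f m = 0 ↔ m ∈ S) (hsurj : Function.Surjective f) :
    Function.Bijective (S.liftQ f (fun m hm => (hker m).2 hm)) := by
  constructor
  · intro q1 q2 h
    obtain ⟨m1, rfl⟩ := Submodule.Quotient.mk_surjective _ q1
    obtain ⟨m2, rfl⟩ := Submodule.Quotient.mk_surjective _ q2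
    change f m1 = f m2 at h
    rw [Submodule.Quotient.eq]
    exact (hker _).1 (by rw [map_sub, h, sub_self])
  · intro n
    obtain ⟨m, rfl⟩ := hsurj n
    exact ⟨Submodule.Quotient.mk m, Submodule.liftQ_apply _ _ _⟩

end Stmt12Aux

set_option maxHeartbeats 2000000 in
/-- Same setup as in the previous statement: `p` an odd prime, `D = ⟨τ,σ⟩` dihedral of
order `2p` acting on a `ℤ_p`-module `U`, `G = ⟨τ⟩`, `tor(U) = tor(U^G)`.  The isomorphism
`φ : I_G U ∩ U^G ≅ Ū^G/Ū_F`, `φ(u^{1-τ}) = ū mod Ū_F`, is `Δ`-antiequivariant: if `δ` is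
the image of `σ` in `Δ = D/G`, acting on the source via `σ` and on the target via the map
`ψ` induced by `σ̄`, then `φ(δ(x)) = δ(φ(x))⁻¹` (written additively: `φ(σ x) = -ψ(φ x)`).
Consequently `φ` induces an isomorphism
`(I_G U ∩ U^G)/(I_G U ∩ U^D) ≅ Ū^D/(Ū_F)^Δ`. -/
theorem stmt_12 (p : ℕ) [Fact p.Prime] (hp : Odd p)
    (U : Type*) [AddCommGroup U] [Module ℤ_[p] U]
    (τ σ : U ≃ₗ[ℤ_[p]] U) (hτ : τ ^ p = 1) (hσ : σ ^ 2 = 1) (hc : σ * τ * σ = τ⁻¹)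
    (htor : Submodule.torsion ℤ_[p] U ≤ fixL p U τ) :
    ∃ (φ : ↥(LinearMap.range (LinearMap.id - τ.toLinearMap) ⊓ fixL p U τ) ≃+
        (↥(UGbar p U τ) ⧸ (UFbar p U τ).comap (UGbar p U τ).subtype))
      (ψ : (↥(UGbar p U τ) ⧸ (UFbar p U τ).comap (UGbar p U τ).subtype) →+
        (↥(UGbar p U τ) ⧸ (UFbar p U τ).comap (UGbar p U τ).subtype)),
      -- φ is the map of the previous statement
      (∀ (u : U)
        (h : u - τ u ∈ LinearMap.range (LinearMap.id - τ.toLinearMap) ⊓ fixL p U τ)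
        (h2 : (Submodule.torsion ℤ_[p] U).mkQ u ∈ UGbar p U τ),
        φ ⟨u - τ u, h⟩ = Submodule.Quotient.mk
          (⟨(Submodule.torsion ℤ_[p] U).mkQ u, h2⟩ : ↥(UGbar p U τ))) ∧
      -- ψ is the map induced on `Ū^G/Ū_F` by `σ̄`
      (∀ (x : U ⧸ Submodule.torsion ℤ_[p] U) (hx : x ∈ UGbar p U τ)
        (hx' : qmap p U σ x ∈ UGbar p U τ),
        ψ (Submodule.Quotient.mk (⟨x, hx⟩ : ↥(UGbar p U τ)))
          = Submodule.Quotient.mk (⟨qmap p U σ x, hx'⟩ : ↥(UGbar p U τ))) ∧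
      -- antiequivariance: φ(δ x) = δ(φ x)⁻¹
      (∀ (x : ↥(LinearMap.range (LinearMap.id - τ.toLinearMap) ⊓ fixL p U τ))
        (hx : σ (x : U) ∈ LinearMap.range (LinearMap.id - τ.toLinearMap) ⊓ fixL p U τ),
        φ ⟨σ (x : U), hx⟩ = - ψ (φ x)) ∧
      -- the induced isomorphism `(I_G U ∩ U^G)/(I_G U ∩ U^D) ≅ Ū^D/(Ū_F)^Δ`
      Nonempty
        ((↥(LinearMap.range (LinearMap.id - τ.toLinearMap) ⊓ fixL p U τ) ⧸
            ((LinearMap.range (LinearMap.id - τ.toLinearMap) ⊓ (fixL p U τ ⊓ fixL p U σ)).comap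
              (LinearMap.range (LinearMap.id - τ.toLinearMap) ⊓ fixL p U τ).subtype)) ≃+
          (↥(UGbar p U τ ⊓ USbar p U σ) ⧸
            ((UFbar p U τ ⊓ USbar p U σ).comap (UGbar p U τ ⊓ USbar p U σ).subtype))) := by
  classical
  -- `2` is a unit in `ℤ_[p]`
  have h2u : IsUnit (2 : ℤ_[p]) := by
    by_contra h
    rw [PadicInt.not_isUnit_iff] at h
    have h2 : ((2 : ℤ) : ℤ_[p]) = (2 : ℤ_[p]) := by push_cast; ring
    rw [← h2] at h
    have h3 : (p : ℤ) ∣ 2 := (PadicInt.norm_int_lt_one_iff_dvd 2).1 h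
    have h4 : p ∣ 2 := by exact_mod_cast h3
    have h5 : p = 2 := (Nat.prime_dvd_prime_iff_eq Fact.out Nat.prime_two).1 h4
    rw [h5] at hp
    exact (Nat.not_odd_iff_even.2 even_two) hp
  obtain ⟨c, hcc⟩ := h2u.exists_right_inv
  have hcc' : c * 2 = 1 := by rw [mul_comm]; exact hcc
  -- the isomorphism φ
  set K : Submodule ℤ_[p] ↥(UGbar p U τ) := (UFbar p U τ).comap (UGbar p U τ).subtype with hK
  have hkerK : ∀ z, Phi τ htor z = 0 ↔ z ∈ K := Phi_eq_zero_iff τ htor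
  have hφbij : Function.Bijective (K.liftQ (Phi τ htor) (fun z hz => (hkerK z).2 hz)) :=
    liftQ_bij K (Phi τ htor) hkerK (Phi_surjective τ hτ htor)
  set φlin := LinearEquiv.ofBijective _ hφbij with hφlin
  -- the induced action of σ̄ on Ū^G and on Ū^G/Ū_F
  set σres : ↥(UGbar p U τ) →ₗ[ℤ_[p]] ↥(UGbar p U τ) :=
    LinearMap.codRestrict _ ((qmap p U σ).comp (UGbar p U τ).subtype)
      (fun z => qsig_mem_UGbar τ σ hσ hc z.2) with hσres
  have hσres_mapsto : K ≤ K.comap σres := by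
    rintro z ⟨v, hv, hveq⟩
    refine ⟨σ v, sig_fix τ σ hσ hc hv, ?_⟩
    show Submodule.Quotient.mk (σ v) = qmap p U σ z.1
    rw [show z.1 = Submodule.Quotient.mk v from hveq.symm, qmap_mk']
  set ψlin := Submodule.mapQ K K σres hσres_mapsto with hψlin
  refine ⟨φlin.symm.toAddEquiv, ψlin.toAddMonoidHom, ?_, ?_, ?_, ?_⟩
  · -- defining property of φ
    intro u h h2
    have hval : φlin (Submodule.Quotient.mk ⟨(Submodule.torsion ℤ_[p] U).mkQ u, h2⟩)
        = ⟨u - τ u, h⟩ := by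
      show K.liftQ (Phi τ htor) (fun z hz => (hkerK z).2 hz)
          (Submodule.Quotient.mk ⟨(Submodule.torsion ℤ_[p] U).mkQ u, h2⟩) = ⟨u - τ u, h⟩
      change Phi τ htor ⟨(Submodule.torsion ℤ_[p] U).mkQ u, h2⟩ = ⟨u - τ u, h⟩
      refine Subtype.ext ?_
      rw [Phi_coe]
      show Fq τ htor (Submodule.Quotient.mk u) = u - τ u
      exact Fq_mk τ htor u
    show φlin.symm ⟨u - τ u, h⟩ = _
    rw [LinearEquiv.symm_apply_eq]
    exact hval.symm
  · -- defining property of ψ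
    intro x hx hx'
    show ψlin (Submodule.Quotient.mk ⟨x, hx⟩) = _
    rw [hψlin, Submodule.mapQ_apply]
    exact congrArg Submodule.Quotient.mk (Subtype.ext rfl)
  · -- antiequivariance
    intro x hxσ
    show φlin.symm ⟨σ (x : U), hxσ⟩ = - ψlin (φlin.symm x)
    obtain ⟨z, hz⟩ := Submodule.Quotient.mk_surjective K (φlin.symm x)
    have hPhiz : Phi τ htor z = x := by
      have : φlin (Submodule.Quotient.mk z) = x := by rw [hz]; exact φlin.apply_symm_apply x
      rwa [show φlin (Submodule.Quotient.mk z) = Phi τ htor z from rfl] at this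
    rw [← hz, LinearEquiv.symm_apply_eq]
    have hstep : φlin (ψlin (Submodule.Quotient.mk z)) = - ⟨σ (x : U), hxσ⟩ := by
      rw [hψlin, Submodule.mapQ_apply,
        show φlin (Submodule.Quotient.mk (σres z)) = Phi τ htor (σres z) from rfl]
      refine Subtype.ext ?_
      rw [Phi_coe]
      show Fq τ htor (qmap p U σ z.1) = ((- ⟨σ (x : U), hxσ⟩ :
        ↥(LinearMap.range (LinearMap.id - τ.toLinearMap) ⊓ fixL p U τ)) : U)
      rw [Fq_qsig τ σ hσ hc htor z.2]
      have hfz : Fq τ htor z.1 = (x : U) := by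
        rw [show Fq τ htor z.1 = ((Phi τ htor z : _) : U) from rfl, hPhiz]
      rw [hfz]
      rfl
    rw [map_neg, hstep, neg_neg]
  · -- the induced isomorphism on the quotients
    set X : Submodule ℤ_[p] U :=
      LinearMap.range (LinearMap.id - τ.toLinearMap) ⊓ fixL p U τ with hXdef
    set W : Submodule ℤ_[p] (U ⧸ Submodule.torsion ℤ_[p] U) :=
      UGbar p U τ ⊓ USbar p U σ with hWdef
    set J : Submodule ℤ_[p] ↥X :=
      (LinearMap.range (LinearMap.id - τ.toLinearMap) ⊓ (fixL p U τ ⊓ fixL p U σ)).comap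
        X.subtype with hJdef
    set K4 : Submodule ℤ_[p] ↥W := (UFbar p U τ ⊓ USbar p U σ).comap W.subtype with hK4def
    have hWle : W ≤ UGbar p U τ := inf_le_left
    set Θ : ↥W →ₗ[ℤ_[p]] (↥X ⧸ J) :=
      J.mkQ ∘ₗ (Phi τ htor) ∘ₗ Submodule.inclusion hWle with hΘdef
    -- σ preserves X
    have hXσ : ∀ a : U, a ∈ X → σ a ∈ X := by
      rintro a ⟨⟨u, hu⟩, hafix⟩
      refine ⟨⟨-(τ⁻¹ (σ u)), ?_⟩, sig_fix τ σ hσ hc hafix⟩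
      have ha : a = u - τ u := by rw [← hu]; simp
      show -(τ⁻¹ (σ u)) - τ (-(τ⁻¹ (σ u))) = σ a
      rw [ha, map_sub σ, sig_tau τ σ hσ hc, map_neg, inv_app₂]
      abel
    -- kernel of Θ
    have hkerΘ : ∀ z : ↥W, Θ z = 0 ↔ z ∈ K4 := by
      intro z
      have hzG : z.1 ∈ UGbar p U τ := z.2.1
      have hzS : qmap p U σ z.1 = z.1 := z.2.2
      constructor
      · intro h0
        have h0' : Submodule.Quotient.mk (Phi τ htor (Submodule.inclusion hWle z))
            = (0 : ↥X ⧸ J) := h0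
        have hbJ : Phi τ htor (Submodule.inclusion hWle z) ∈ J :=
          (Submodule.Quotient.mk_eq_zero J).1 h0'
        have hbfixσ : σ ((Phi τ htor (Submodule.inclusion hWle z) : _) : U)
            = ((Phi τ htor (Submodule.inclusion hWle z) : _) : U) := hbJ.2.2
        have hbeq : ((Phi τ htor (Submodule.inclusion hWle z) : _) : U)
            = Fq τ htor z.1 := rfl
        have hb2 : - σ (Fq τ htor z.1) = Fq τ htor z.1 := by
          have h := Fq_qsig τ σ hσ hc htor hzG
          rw [hzS] at h
          exact h.symm
        rw [hbeq] at hbfixσ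
        have hbb : -(Fq τ htor z.1) = Fq τ htor z.1 := by rw [hbfixσ] at hb2; exact hb2
        have h2b : (2 : ℤ_[p]) • (Fq τ htor z.1) = 0 := by
          rw [two_smul]
          nth_rewrite 1 [← hbb]
          exact neg_add_cancel _
        have hb0 : Fq τ htor z.1 = 0 := by
          calc Fq τ htor z.1 = (1 : ℤ_[p]) • Fq τ htor z.1 := (one_smul _ _).symm
            _ = (c * 2) • Fq τ htor z.1 := by rw [hcc']
            _ = c • ((2 : ℤ_[p]) • Fq τ htor z.1) := mul_smul _ _ _
            _ = 0 := by rw [h2b, smul_zero]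
        have hPhi0 : Phi τ htor (Submodule.inclusion hWle z) = 0 :=
          Subtype.ext (by rw [hbeq, hb0]; rfl)
        have hzF : z.1 ∈ UFbar p U τ := (Phi_eq_zero_iff τ htor _).1 hPhi0
        exact ⟨hzF, z.2.2⟩
      · intro hzK
        have hPhi0 : Phi τ htor (Submodule.inclusion hWle z) = 0 :=
          (Phi_eq_zero_iff τ htor _).2 hzK.1
        show J.mkQ (Phi τ htor (Submodule.inclusion hWle z)) = 0
        rw [hPhi0, map_zero]
    -- surjectivity of Θ
    have hΘsurj : Function.Surjective Θ := by
      intro xq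
      obtain ⟨x, rfl⟩ := Submodule.Quotient.mk_surjective J xq
      have hax : (x : U) ∈ X := x.2
      have haσ : σ (x : U) ∈ X := hXσ _ hax
      have ham_mem : c • ((x : U) - σ (x : U)) ∈ X :=
        Submodule.smul_mem _ _ (sub_mem hax haσ)
      have hσam : σ (c • ((x : U) - σ (x : U))) = -(c • ((x : U) - σ (x : U))) := by
        rw [map_smul, map_sub, sig_sig σ hσ, ← smul_neg]
        congr 1
        abel
      obtain ⟨z₀, hz₀⟩ := Phi_surjective τ hτ htor ⟨c • ((x : U) - σ (x : U)), ham_mem⟩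
      have hqq : ∀ y : U ⧸ Submodule.torsion ℤ_[p] U, qmap p U σ (qmap p U σ y) = y := by
        intro y
        obtain ⟨u, rfl⟩ := Submodule.Quotient.mk_surjective _ y
        rw [qmap_mk', qmap_mk', sig_sig σ hσ]
      have hPhiw : Phi τ htor (σres z₀ - z₀) = 0 := by
        rw [map_sub, hz₀]
        have h1 : Phi τ htor (σres z₀) = ⟨c • ((x : U) - σ (x : U)), ham_mem⟩ := by
          refine Subtype.ext ?_
          rw [Phi_coe]
          show Fq τ htor (qmap p U σ z₀.1) = c • ((x : U) - σ (x : U))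
          rw [Fq_qsig τ σ hσ hc htor z₀.2]
          have h2 : Fq τ htor z₀.1 = c • ((x : U) - σ (x : U)) := by
            rw [show Fq τ htor z₀.1 = ((Phi τ htor z₀ : _) : U) from rfl, hz₀]
          rw [h2, hσam, neg_neg]
        rw [h1, sub_self]
      have hσw : qmap p U σ (σres z₀ - z₀).1 = - (σres z₀ - z₀).1 := by
        have hw1 : (σres z₀ - z₀).1 = qmap p U σ z₀.1 - z₀.1 := rfl
        rw [hw1, map_sub, hqq]
        abel
      have hzS : qmap p U σ (z₀ + c • (σres z₀ - z₀)).1 = (z₀ + c • (σres z₀ - z₀)).1 := by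
        have hz1 : (z₀ + c • (σres z₀ - z₀)).1 = z₀.1 + c • (σres z₀ - z₀).1 := rfl
        rw [hz1, map_add, map_smul, hσw]
        have hσz₀ : qmap p U σ z₀.1 = z₀.1 + (σres z₀ - z₀).1 := by
          rw [show (σres z₀ - z₀).1 = qmap p U σ z₀.1 - z₀.1 from rfl]
          abel
        rw [hσz₀]
        match_scalars
        all_goals (try ring)
        all_goals (try linear_combination -hcc)
        all_goals linear_combination hcc
      refine ⟨⟨(z₀ + c • (σres z₀ - z₀)).1, ⟨(z₀ + c • (σres z₀ - z₀)).2, hzS⟩⟩, ?_⟩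
      show J.mkQ (Phi τ htor (Submodule.inclusion hWle
        ⟨(z₀ + c • (σres z₀ - z₀)).1, ⟨(z₀ + c • (σres z₀ - z₀)).2, hzS⟩⟩))
        = Submodule.Quotient.mk x
      have hiso : Phi τ htor (Submodule.inclusion hWle
          ⟨(z₀ + c • (σres z₀ - z₀)).1, ⟨(z₀ + c • (σres z₀ - z₀)).2, hzS⟩⟩)
          = Phi τ htor (z₀ + c • (σres z₀ - z₀)) := congrArg _ (Subtype.ext rfl)
      rw [hiso, map_add, map_smul, hPhiw, smul_zero, add_zero, hz₀,
        Submodule.mkQ_apply, Submodule.Quotient.eq]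
      -- show the difference lies in J
      have hapmem : c • ((x : U) + σ (x : U)) ∈
          LinearMap.range (LinearMap.id - τ.toLinearMap) ⊓ (fixL p U τ ⊓ fixL p U σ) := by
        refine ⟨Submodule.smul_mem _ _ (add_mem hax.1 haσ.1), ?_, ?_⟩
        · exact Submodule.smul_mem _ _ (add_mem hax.2 haσ.2)
        · show σ (c • ((x : U) + σ (x : U))) = c • ((x : U) + σ (x : U))
          rw [map_smul, map_add, sig_sig σ hσ]
          congr 1
          abel
      refine Submodule.mem_comap.2 ?_
      have hcoe : X.subtype ((⟨c • ((x : U) - σ (x : U)), ham_mem⟩ : ↥X) - x)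
          = c • ((x : U) - σ (x : U)) - (x : U) := rfl
      rw [hcoe, show c • ((x : U) - σ (x : U)) - (x : U) = -(c • ((x : U) + σ (x : U))) by
        match_scalars
        all_goals (try ring)
        all_goals (try linear_combination -hcc)
        all_goals linear_combination hcc]
      exact neg_mem hapmem
    exact ⟨(LinearEquiv.ofBijective (K4.liftQ Θ (fun m hm => (hkerΘ m).2 hm))
      (liftQ_bij K4 Θ hkerΘ hΘsurj)).symm.toAddEquiv⟩
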